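/- Let * be a continuous t-norm. Define φ, ξ : [0,∞] → [0,1] by φ(t) = t for 0 ≤ t ≤ 1 and φ(t) = 1 for t > 1 (including t = ∞), and ξ(t) = 0 for t ≤ 1 and ξ(t) = 1 for t > 1. Then φ and ξ are distance distributions with ξ ≤ φ, but there exists no distance distribution ψ with φ ⊗ ψ = ξ. In particular, the quantale (Δ, ⊗, κ_{0,1}) of distance distributions is not divisible. -/

import Mathlib

open unitInterval
open scoped ENNReal

noncomputable section

instance : Fact ((0:ℝ) ≤ 1) := ⟨zero_le_one⟩

/-- A distance distribution: a map `φ : [0,∞] → [0,1]` with `φ t = ⨆ s < t, φ s`. -/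
def DistDistr (φ : ℝ≥0∞ → I) : Prop :=
  ∀ t, φ t = ⨆ (s : ℝ≥0∞) (_ : s < t), φ s

/-- The one-step function `κ_{p,a}`. -/
def kappa (p : ℝ≥0∞) (a : I) : ℝ≥0∞ → I :=
  fun t => if t ≤ p then 0 else a

/-- A continuous t-norm on `[0,1]`. -/
structure ContinuousTNorm where
  mul : I → I → I
  continuous' : Continuous fun p : I × I => mul p.1 p.2
  comm : ∀ a b, mul a b = mul b a
  assoc : ∀ a b c, mul (mul a b) c = mul a (mul b c)
  mono : ∀ a, Monotone (mul a)
  mul_one : ∀ a, mul a 1 = a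

/-- The residual `a →* b` of a continuous t-norm. -/
def ContinuousTNorm.residual (T : ContinuousTNorm) (a b : I) : I :=
  sSup {c | T.mul a c ≤ b}

/-- Convolution of maps `[0,∞] → [0,1]` w.r.t. a continuous t-norm. -/
def conv (T : ContinuousTNorm) (φ ψ : ℝ≥0∞ → I) : ℝ≥0∞ → I :=
  fun t => ⨆ (r : ℝ≥0∞) (s : ℝ≥0∞) (_ : r + s = t), T.mul (φ r) (ψ s)

/-- `φ⁻ t = ⨆ s < t, φ s`. -/
def lower (φ : ℝ≥0∞ → I) : ℝ≥0∞ → I :=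
  fun t => ⨆ (s : ℝ≥0∞) (_ : s < t), φ s

/- Auxiliary lemmas -/

lemma aux_ne_top_54 : (5/4:ℝ≥0∞) ≠ ⊤ := by simp [ENNReal.div_eq_top]
lemma aux_ne_top_34 : (3/4:ℝ≥0∞) ≠ ⊤ := by simp [ENNReal.div_eq_top]
lemma aux_ne_top_12 : (1/2:ℝ≥0∞) ≠ ⊤ := by norm_num

lemma aux_one_lt_54 : (1:ℝ≥0∞) < 5/4 := by
  rw [← ENNReal.toReal_lt_toReal (by norm_num) aux_ne_top_54]; norm_num

lemma aux_34_add_12 : (3/4:ℝ≥0∞) + 1/2 = 5/4 := by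
  rw [← ENNReal.toReal_eq_toReal_iff' (by simp [aux_ne_top_34, aux_ne_top_12]) aux_ne_top_54]
  rw [ENNReal.toReal_add aux_ne_top_34 aux_ne_top_12]; norm_num

lemma aux_12_le_one : (1/2:ℝ≥0∞) ≤ 1 := by norm_num

lemma aux_toReal_12 : ((1/2:ℝ≥0∞)).toReal = 1/2 := by norm_num

lemma DistDistr.mono' {ψ : ℝ≥0∞ → I} (h : DistDistr ψ) : Monotone ψ := by
  intro a b hab
  rw [h a, h b]
  exact iSup_mono fun s => iSup_le fun hs => le_iSup (fun _ : s < b => ψ s) (hs.trans_le hab)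

lemma ContinuousTNorm.mul_le_left (T : ContinuousTNorm) (a b : I) : T.mul a b ≤ a :=
  (T.mono a le_one').trans_eq (T.mul_one a)

lemma ContinuousTNorm.mul_le_right (T : ContinuousTNorm) (a b : I) : T.mul a b ≤ b := by
  rw [T.comm]; exact T.mul_le_left b a

theorem stmt_6 (T : ContinuousTNorm) (φ ξ : ℝ≥0∞ → I)
    (hφ1 : ∀ t : ℝ≥0∞, t ≤ 1 → (φ t : ℝ) = t.toReal)
    (hφ2 : ∀ t : ℝ≥0∞, 1 < t → φ t = 1)
    (hξ1 : ∀ t : ℝ≥0∞, t ≤ 1 → ξ t = 0)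
    (hξ2 : ∀ t : ℝ≥0∞, 1 < t → ξ t = 1) :
    DistDistr φ ∧ DistDistr ξ ∧ (∀ t, ξ t ≤ φ t) ∧
      ¬ ∃ ψ : ℝ≥0∞ → I, DistDistr ψ ∧ conv T φ ψ = ξ := by
  have hφmono : Monotone φ := by
    intro s t hst
    rcases le_or_gt t 1 with ht | ht
    · have hs := hst.trans ht
      have hc : (φ s : ℝ) ≤ (φ t : ℝ) := by
        rw [hφ1 s hs, hφ1 t ht]
        exact ENNReal.toReal_mono (ht.trans_lt ENNReal.one_lt_top).ne hst
      exact_mod_cast hc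
    · rw [hφ2 t ht]; exact le_one'
  have hξmono : Monotone ξ := by
    intro s t hst
    rcases le_or_gt t 1 with ht | ht
    · rw [hξ1 s (hst.trans ht), hξ1 t ht]
    · rw [hξ2 t ht]; exact le_one'
  have hDφ : DistDistr φ := by
    intro t
    refine le_antisymm ?_ (iSup₂_le fun s hs => hφmono hs.le)
    rcases eq_or_ne t 0 with rfl | ht0
    · have : φ 0 = 0 := by
        ext
        rw [hφ1 0 zero_le']; simp
      rw [this]
      exact nonneg'
    rcases le_or_gt t 1 with ht | ht
    · refine le_of_forall_lt fun c hc => ?_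
      have hc' : (c : ℝ) < t.toReal := by
        rw [← hφ1 t ht]; exact_mod_cast hc
      obtain ⟨m, hm1, hm2⟩ := exists_between hc'
      have hm0 : (0:ℝ) ≤ m := le_trans c.2.1 hm1.le
      set s : ℝ≥0∞ := ENNReal.ofReal m with hs
      have hst : s < t := by
        rw [hs, ENNReal.ofReal_lt_iff_lt_toReal hm0 (ht.trans_lt ENNReal.one_lt_top).ne]
        exact hm2
      have hsv : (φ s : ℝ) = m := by
        rw [hφ1 s (hst.le.trans ht), hs, ENNReal.toReal_ofReal hm0]
      have : c < φ s := by
        rw [← Subtype.coe_lt_coe, hsv]; exact hm1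
      exact this.trans_le (le_iSup_of_le s (le_iSup (fun _ : s < t => φ s) hst))
    · obtain ⟨s, hs1, hs2⟩ := exists_between ht
      rw [hφ2 t ht, ← hφ2 s hs1]
      exact le_iSup_of_le s (le_iSup (fun _ : s < t => φ s) hs2)
  have hDξ : DistDistr ξ := by
    intro t
    refine le_antisymm ?_ (iSup₂_le fun s hs => hξmono hs.le)
    rcases le_or_gt t 1 with ht | ht
    · rw [hξ1 t ht]; exact nonneg'
    · obtain ⟨s, hs1, hs2⟩ := exists_between ht
      rw [hξ2 t ht, ← hξ2 s hs1]
      exact le_iSup_of_le s (le_iSup (fun _ : s < t => ξ s) hs2)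
  have hle : ∀ t, ξ t ≤ φ t := by
    intro t
    rcases le_or_gt t 1 with ht | ht
    · rw [hξ1 t ht]; exact nonneg'
    · rw [hξ2 t ht, hφ2 t ht]
  refine ⟨hDφ, hDξ, hle, ?_⟩
  rintro ⟨ψ, hψ, hconv⟩
  have hψmono := hψ.mono'
  -- Step 1: ψ (1/2) = 1
  have hhalf : ψ (1/2 : ℝ≥0∞) = 1 := by
    refine le_antisymm le_one' (le_of_forall_lt fun c hc => ?_)
    set c0 : I := ⟨3/4, by constructor <;> norm_num⟩ with hc0def
    have hc0lt : c ⊔ c0 < 1 := by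
      rw [sup_lt_iff]
      refine ⟨hc, ?_⟩
      rw [← Subtype.coe_lt_coe, hc0def]
      norm_num
    have hconv54 : conv T φ ψ (5/4) = 1 := by
      rw [hconv]; exact hξ2 _ aux_one_lt_54
    have hnot : ¬ conv T φ ψ (5/4) ≤ c ⊔ c0 := by
      rw [hconv54]; exact not_le.mpr hc0lt
    rw [conv] at hnot
    simp only [iSup_le_iff, not_forall, not_le] at hnot
    obtain ⟨r, s, hrs, hterm⟩ := hnot
    have hφr : c ⊔ c0 < φ r := hterm.trans_le (T.mul_le_left _ _)
    have hψs : c ⊔ c0 < ψ s := hterm.trans_le (T.mul_le_right _ _)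
    -- r > 3/4
    have hr : (3/4 : ℝ≥0∞) < r := by
      by_contra h
      push_neg at h
      have hr1 : r ≤ 1 := h.trans (by
        rw [← ENNReal.toReal_le_toReal aux_ne_top_34 (by norm_num)]; norm_num)
      have h1 : (φ r : ℝ) ≤ 3/4 := by
        rw [hφ1 r hr1]
        calc r.toReal ≤ ((3/4:ℝ≥0∞)).toReal := ENNReal.toReal_mono aux_ne_top_34 h
          _ = 3/4 := by norm_num
      have h2 : (3/4 : ℝ) < (φ r : ℝ) := by
        have : c0 < φ r := (le_sup_right : c0 ≤ c ⊔ c0).trans_lt hφr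
        exact_mod_cast this
      linarith
    -- s < 1/2
    have hs : s < 1/2 := by
      by_contra h
      push_neg at h
      have : (5/4:ℝ≥0∞) < r + s := by
        calc (5/4:ℝ≥0∞) = 3/4 + 1/2 := aux_34_add_12.symm
          _ < r + 1/2 := ENNReal.add_lt_add_right aux_ne_top_12 hr
          _ ≤ r + s := add_le_add_right h r
      exact this.ne' hrs
    exact ((le_sup_left : c ≤ c ⊔ c0).trans_lt hψs).trans_le (hψmono hs.le)
  -- Step 2: contradiction at t = 1
  have hadd : (1/2 : ℝ≥0∞) + 1/2 = 1 := ENNReal.add_halves 1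
  have hterm : T.mul (φ (1/2)) (ψ (1/2)) ≤ conv T φ ψ 1 := by
    rw [conv]
    exact le_iSup_of_le (1/2) (le_iSup_of_le (1/2)
      (le_iSup (fun _ : (1/2:ℝ≥0∞) + 1/2 = 1 => T.mul (φ (1/2)) (ψ (1/2))) hadd))
  rw [hhalf, T.mul_one, hconv, hξ1 1 le_rfl] at hterm
  have hval : (φ (1/2 : ℝ≥0∞) : ℝ) = 1/2 := by
    rw [hφ1 _ aux_12_le_one, aux_toReal_12]
  have : (φ (1/2 : ℝ≥0∞) : ℝ) ≤ 0 := by exact_mod_cast hterm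
  rw [hval] at this
  norm_num at this
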